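/- In the Riemannian Lie algebra family, the tensor F satisfies the cyclic identity F(x,y,z) + F(y,z,x) + F(z,x,y) = 0 for all x, y, z ∈ 𝔤 (i.e., the manifold belongs to the class 𝒲₃). -/

import Mathlib

noncomputable section

/-- The inner product for which the basis `b` is orthonormal. -/
def gR {L : Type*} [AddCommGroup L] [Module ℝ L] (b : Module.Basis (Fin 4) ℝ L) (x y : L) : ℝ :=
  ∑ i, b.repr x i * b.repr y i

/-- The almost product structure `P` with `PX₁ = X₃`, `PX₂ = X₄`, `PX₃ = X₁`, `PX₄ = X₂`. -/
def PR {L : Type*} [AddCommGroup L] [Module ℝ L] (b : Module.Basis (Fin 4) ℝ L) : L →ₗ[ℝ] L :=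
  b.constr ℝ ![b 2, b 3, b 0, b 1]

/-- `(∇ₓP)y = (1/2)([x,Py] − P[x,y])`. -/
def nablaP {L : Type*} [LieRing L] [LieAlgebra ℝ L] (b : Module.Basis (Fin 4) ℝ L) (x y : L) : L :=
  (2⁻¹ : ℝ) • (⁅x, PR b y⁆ - PR b ⁅x, y⁆)

/-- `F(x,y,z) = g((∇ₓP)y, z)`. -/
def FR {L : Type*} [LieRing L] [LieAlgebra ℝ L] (b : Module.Basis (Fin 4) ℝ L) (x y z : L) : ℝ :=
  gR b (nablaP b x y) z

/-- The curvature tensor `R(x,y,z,w) = −(1/4)g([x,y],[z,w])`. -/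
def RT {L : Type*} [LieRing L] [LieAlgebra ℝ L] (b : Module.Basis (Fin 4) ℝ L) (x y z w : L) : ℝ :=
  -(4⁻¹ : ℝ) * gR b ⁅x, y⁆ ⁅z, w⁆

/-- The Ricci tensor `ρ(y,z) = Σᵢ R(Xᵢ,y,z,Xᵢ)`. -/
def ricR {L : Type*} [LieRing L] [LieAlgebra ℝ L] (b : Module.Basis (Fin 4) ℝ L) (y z : L) : ℝ :=
  ∑ i, RT b (b i) y z (b i)

/-- The scalar curvature `τ = Σᵢ ρ(Xᵢ,Xᵢ)`. -/
def tauR {L : Type*} [LieRing L] [LieAlgebra ℝ L] (b : Module.Basis (Fin 4) ℝ L) : ℝ :=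
  ∑ i, ricR b (b i) (b i)

/-- The Nijenhuis tensor `N(x,y) = [x,y] + P[Px,y] + P[x,Py] − [Px,Py]`. -/
def NijR {L : Type*} [LieRing L] [LieAlgebra ℝ L] (b : Module.Basis (Fin 4) ℝ L) (x y : L) : L :=
  ⁅x, y⁆ + PR b ⁅PR b x, y⁆ + PR b ⁅x, PR b y⁆ - ⁅PR b x, PR b y⁆

/-- Sectional curvature of the 2-plane spanned by `Xᵢ` and `Xⱼ`. -/
def sectR {L : Type*} [LieRing L] [LieAlgebra ℝ L] (b : Module.Basis (Fin 4) ℝ L) (i j : Fin 4) : ℝ :=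
  RT b (b i) (b j) (b j) (b i) /
    (gR b (b i) (b i) * gR b (b j) (b j) - (gR b (b i) (b j)) ^ 2)

section AuxW3
variable {L : Type*} [LieRing L] [LieAlgebra ℝ L] (b : Module.Basis (Fin 4) ℝ L)

lemma gR_add_left' (x x' y : L) : gR b (x + x') y = gR b x y + gR b x' y := by
  simp [gR, add_mul, Finset.sum_add_distrib]

lemma gR_smul_left' (c : ℝ) (x y : L) : gR b (c • x) y = c * gR b x y := by
  simp [gR, Finset.mul_sum, mul_assoc]

lemma gR_add_right' (x y y' : L) : gR b x (y + y') = gR b x y + gR b x y' := by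
  simp [gR, mul_add, Finset.sum_add_distrib]

lemma gR_smul_right' (c : ℝ) (x y : L) : gR b x (c • y) = c * gR b x y := by
  simp only [gR, _root_.map_smul, Finsupp.smul_apply, smul_eq_mul, Finset.mul_sum]
  exact Finset.sum_congr rfl fun i _ => by ring

lemma nablaP_add_left' (x x' y : L) :
    nablaP b (x + x') y = nablaP b x y + nablaP b x' y := by
  simp only [nablaP, add_lie, _root_.map_add, ← smul_add]; congr 1; abel

lemma nablaP_smul_left' (c : ℝ) (x y : L) :
    nablaP b (c • x) y = c • nablaP b x y := by
  simp only [nablaP, smul_lie, _root_.map_smul, ← smul_sub, smul_comm c]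

lemma nablaP_add_right' (x y y' : L) :
    nablaP b x (y + y') = nablaP b x y + nablaP b x y' := by
  simp only [nablaP, lie_add, _root_.map_add, ← smul_add]; congr 1; abel

lemma nablaP_smul_right' (c : ℝ) (x y : L) :
    nablaP b x (c • y) = c • nablaP b x y := by
  simp only [nablaP, lie_smul, _root_.map_smul, ← smul_sub, smul_comm c]

lemma FR_add1' (x x' y z : L) : FR b (x + x') y z = FR b x y z + FR b x' y z := by
  rw [FR, nablaP_add_left', gR_add_left']; rfl
lemma FR_smul1' (c : ℝ) (x y z : L) : FR b (c • x) y z = c * FR b x y z := by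
  rw [FR, nablaP_smul_left', gR_smul_left']; rfl
lemma FR_add2' (x y y' z : L) : FR b x (y + y') z = FR b x y z + FR b x y' z := by
  rw [FR, nablaP_add_right', gR_add_left']; rfl
lemma FR_smul2' (c : ℝ) (x y z : L) : FR b x (c • y) z = c * FR b x y z := by
  rw [FR, nablaP_smul_right', gR_smul_left']; rfl
lemma FR_add3' (x y z z' : L) : FR b x y (z + z') = FR b x y z + FR b x y z' := by
  rw [FR, gR_add_right']; rfl
lemma FR_smul3' (c : ℝ) (x y z : L) : FR b x y (c • z) = c * FR b x y z := by
  rw [FR, gR_smul_right']; rfl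

lemma PR_b0 : PR b (b 0) = b 2 := by simp [PR, Module.Basis.constr_basis]
lemma PR_b1 : PR b (b 1) = b 3 := by simp [PR, Module.Basis.constr_basis]
lemma PR_b2 : PR b (b 2) = b 0 := by simp [PR, Module.Basis.constr_basis]
lemma PR_b3 : PR b (b 3) = b 1 := by simp [PR, Module.Basis.constr_basis]

end AuxW3

set_option maxHeartbeats 2000000 in
theorem w3_class
    (L : Type*) [LieRing L] [LieAlgebra ℝ L] (b : Module.Basis (Fin 4) ℝ L)
    (l1 l2 l3 l4 : ℝ)
    (h12 : ⁅b 0, b 1⁆ = l1 • b 2 + l2 • b 3)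
    (h13 : ⁅b 0, b 2⁆ = -(l1 • b 1) + l4 • b 3)
    (h14 : ⁅b 0, b 3⁆ = -(l2 • b 1) - l4 • b 2)
    (h23 : ⁅b 1, b 2⁆ = l1 • b 0 + l3 • b 3)
    (h24 : ⁅b 1, b 3⁆ = l2 • b 0 - l3 • b 2)
    (h34 : ⁅b 2, b 3⁆ = l4 • b 0 + l3 • b 1)
    : ∀ x y z : L, FR b x y z + FR b y z x + FR b z x y = 0 := by
  have h21 : ⁅b 1, b 0⁆ = -(l1 • b 2 + l2 • b 3) := by rw [← lie_skew, h12]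
  have h31 : ⁅b 2, b 0⁆ = -(-(l1 • b 1) + l4 • b 3) := by rw [← lie_skew, h13]
  have h41 : ⁅b 3, b 0⁆ = -(-(l2 • b 1) - l4 • b 2) := by rw [← lie_skew, h14]
  have h32 : ⁅b 2, b 1⁆ = -(l1 • b 0 + l3 • b 3) := by rw [← lie_skew, h23]
  have h42 : ⁅b 3, b 1⁆ = -(l2 • b 0 - l3 • b 2) := by rw [← lie_skew, h24]
  have h43 : ⁅b 3, b 2⁆ = -(l4 • b 0 + l3 • b 1) := by rw [← lie_skew, h34]
  -- cyclic sum on basis vectors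
  have key : ∀ i j k : Fin 4,
      FR b (b i) (b j) (b k) + FR b (b j) (b k) (b i) + FR b (b k) (b i) (b j) = 0 := by
    intro i j k
    fin_cases i <;> fin_cases j <;> fin_cases k <;>
    · simp only [Fin.isValue, Fin.zero_eta, Fin.mk_one, Fin.reduceFinMk, FR, nablaP, PR_b0, PR_b1, PR_b2, PR_b3,
        h12, h13, h14, h23, h24, h34, h21, h31, h32, h41, h42, h43, lie_self,
        lie_add, lie_smul, add_lie, smul_lie, lie_neg, neg_lie, sub_lie, lie_sub,
        _root_.map_add, _root_.map_smul, _root_.map_neg, _root_.map_sub, _root_.map_zero,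
        smul_neg, smul_add, smul_sub]
      simp only [gR, _root_.map_add, _root_.map_smul, _root_.map_neg, _root_.map_sub,
        _root_.map_zero, Finsupp.coe_add, Finsupp.coe_smul, Pi.add_apply, Pi.smul_apply,
        Pi.neg_apply, Pi.sub_apply, Finsupp.neg_apply, Finsupp.sub_apply, smul_eq_mul,
        Module.Basis.repr_self, Finsupp.coe_zero, Pi.zero_apply, Finsupp.single_apply,
        Fin.sum_univ_four]
      simp only [Fin.reduceEq, reduceIte, Fin.isValue, if_true, if_false]
      ring
  -- extend by trilinearity
  intro x y z
  set C : L → L → L → ℝ := fun x y z => FR b x y z + FR b y z x + FR b z x y with hC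
  show C x y z = 0
  have C1 : ∀ (c : ℝ) (x x' y z : L), C (c • x + x') y z = c * C x y z + C x' y z := by
    intro c x x' y z
    simp only [hC, FR_add1', FR_smul1', FR_add2', FR_smul2', FR_add3', FR_smul3']
    ring
  have C2 : ∀ (c : ℝ) (x y y' z : L), C x (c • y + y') z = c * C x y z + C x y' z := by
    intro c x y y' z
    simp only [hC, FR_add1', FR_smul1', FR_add2', FR_smul2', FR_add3', FR_smul3']
    ring
  have C3 : ∀ (c : ℝ) (x y z z' : L), C x y (c • z + z') = c * C x y z + C x y z' := by
    intro c x y z z'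
    simp only [hC, FR_add1', FR_smul1', FR_add2', FR_smul2', FR_add3', FR_smul3']
    ring
  have expand1 : ∀ (a0 a1 a2 a3 : ℝ) (y z : L),
      C (a0 • b 0 + a1 • b 1 + a2 • b 2 + a3 • b 3) y z
        = a0 * C (b 0) y z + a1 * C (b 1) y z + a2 * C (b 2) y z + a3 * C (b 3) y z := by
    intro a0 a1 a2 a3 y z
    simp only [hC, FR_add1', FR_smul1', FR_add2', FR_smul2', FR_add3', FR_smul3']
    ring
  have expand2 : ∀ (a0 a1 a2 a3 : ℝ) (x z : L),
      C x (a0 • b 0 + a1 • b 1 + a2 • b 2 + a3 • b 3) z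
        = a0 * C x (b 0) z + a1 * C x (b 1) z + a2 * C x (b 2) z + a3 * C x (b 3) z := by
    intro a0 a1 a2 a3 x z
    simp only [hC, FR_add1', FR_smul1', FR_add2', FR_smul2', FR_add3', FR_smul3']
    ring
  have expand3 : ∀ (a0 a1 a2 a3 : ℝ) (x y : L),
      C x y (a0 • b 0 + a1 • b 1 + a2 • b 2 + a3 • b 3)
        = a0 * C x y (b 0) + a1 * C x y (b 1) + a2 * C x y (b 2) + a3 * C x y (b 3) := by
    intro a0 a1 a2 a3 x y
    simp only [hC, FR_add1', FR_smul1', FR_add2', FR_smul2', FR_add3', FR_smul3']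
    ring
  have key' : ∀ i j k : Fin 4, C (b i) (b j) (b k) = 0 := key
  rw [← b.sum_repr x, ← b.sum_repr y, ← b.sum_repr z,
    Fin.sum_univ_four, Fin.sum_univ_four, Fin.sum_univ_four]
  simp only [expand1, expand2, expand3, key', mul_zero, add_zero, zero_add]
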